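/- Suppose a Frobenius group FC with kernel F and cyclic complement C = ⟨c⟩ of order n acts faithfully on a finite vector space V of characteristic p with p coprime to |F|. Then the fixed-point subspace C_V(c) is nonzero and the natural semidirect product V ⋊ C contains an element of order p·n. -/

import Mathlib

/-- The monoid homomorphism sending an additive automorphism of `V` to the
corresponding multiplicative automorphism of `Multiplicative V`. -/
def addAutToMulAut (V : Type*) [AddGroup V] :
    Multiplicative (AddAut V) →* MulAut (Multiplicative V) where
  toFun e := AddEquiv.toMultiplicative (Multiplicative.toAdd e)
  map_one' := rfl
  map_mul' _ _ := rfl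

/-- If a Frobenius group `G = F ⋊ C`, with kernel `F` and cyclic complement
`C = ⟨c⟩` of order `n`, acts faithfully and linearly on a vector space `V` of
characteristic `p` with `p` coprime to `|F|`, then `c` has a nonzero fixed
vector on `V`, and the natural semidirect product `V ⋊ C` contains an element
of order `p * n`. -/
theorem frobenius_group_action_order (k V G : Type*) [Field k] [AddCommGroup V]
    [Module k V] [Group G] [Finite G] (p n : ℕ) (hp : p.Prime) [CharP k p]
    [DistribMulAction G V] [SMulCommClass G k V] [FaithfulSMul G V]
    (F C : Subgroup G) (hF : F.Normal) (hFne : F ≠ ⊥) (c : G)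
    (hC : C = Subgroup.zpowers c) (hn : orderOf c = n) (hn1 : 1 < n)
    (hdisj : F ⊓ C = ⊥) (hjoin : F ⊔ C = ⊤)
    (hfrob : ∀ x ∈ C, x ≠ 1 → ∀ f ∈ F, x * f * x⁻¹ = f → f = 1)
    (hcop : Nat.Coprime p (Nat.card F)) :
    (∃ v : V, v ≠ 0 ∧ c • v = v) ∧
      ∃ g : SemidirectProduct (Multiplicative V) C
          ((addAutToMulAut V).comp
            ((DistribMulAction.toAddAut G V).comp C.subtype)),
        orderOf g = p * n := by
  classical
  haveI : Fintype F := Fintype.ofFinite F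
  have hcmem : c ∈ C := by rw [hC]; exact Subgroup.mem_zpowers c
  have hn0 : 0 < n := lt_trans one_pos hn1
  have hcn : c ^ n = 1 := by rw [← hn]; exact pow_orderOf_eq_one c
  have hcine : ∀ i : ℕ, 0 < i → i < n → c ^ i ≠ 1 := by
    intro i hi1 hin h
    have hd := orderOf_dvd_of_pow_eq_one h
    rw [hn] at hd
    exact absurd (Nat.le_of_dvd hi1 hd) (not_le.mpr hin)
  -- key claim: some partial orbit-sum is nonzero
  have key : ∃ v : V, (∑ i ∈ Finset.range n, (c ^ i) • v) ≠ 0 := by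
    by_contra h0
    push_neg at h0
    -- the conjugation bijection
    have bij : ∀ i : ℕ, 0 < i → i < n → ∀ v : V,
        (∑ f : F, ((f : G) * c ^ i * (f : G)⁻¹) • v)
          = ∑ f : F, ((f : G) * c ^ i) • v := by
      intro i hi1 hin v
      set ψ : F → F := fun f =>
        ⟨(f : G) * c ^ i * (f : G)⁻¹ * (c ^ i)⁻¹, by
          have h1 : c ^ i * ((f : G))⁻¹ * (c ^ i)⁻¹ ∈ F :=
            hF.conj_mem _ (F.inv_mem f.2) (c ^ i)
          have h2 : (f : G) * (c ^ i * ((f : G))⁻¹ * (c ^ i)⁻¹) ∈ F :=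
            F.mul_mem f.2 h1
          have : (f : G) * c ^ i * (f : G)⁻¹ * (c ^ i)⁻¹
              = (f : G) * (c ^ i * ((f : G))⁻¹ * (c ^ i)⁻¹) := by group
          rw [this]; exact h2⟩ with hψ
      have hinj : Function.Injective ψ := by
        intro a b hab
        have hab' : (a : G) * c ^ i * (a : G)⁻¹ * (c ^ i)⁻¹
            = (b : G) * c ^ i * (b : G)⁻¹ * (c ^ i)⁻¹ := congrArg Subtype.val hab
        have h3 : (a : G) * c ^ i * (a : G)⁻¹ = (b : G) * c ^ i * (b : G)⁻¹ :=
          mul_right_cancel hab'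
        have h5 : (b : G)⁻¹ * (a : G) * c ^ i = c ^ i * ((b : G)⁻¹ * (a : G)) := by
          calc (b : G)⁻¹ * (a : G) * c ^ i
              = (b : G)⁻¹ * ((a : G) * c ^ i * (a : G)⁻¹) * a := by group
            _ = (b : G)⁻¹ * ((b : G) * c ^ i * (b : G)⁻¹) * a := by rw [h3]
            _ = c ^ i * ((b : G)⁻¹ * (a : G)) := by group
        have h4 : c ^ i * ((b : G)⁻¹ * (a : G)) * (c ^ i)⁻¹
            = (b : G)⁻¹ * (a : G) := by rw [← h5]; group
        have h6 : ((b⁻¹ * a : F) : G) = 1 := by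
          refine hfrob (c ^ i) (C.pow_mem hcmem i) (hcine i hi1 hin) _
            (b⁻¹ * a : F).2 ?_
          simpa using h4
        have : (b⁻¹ * a : F) = 1 := Subtype.ext h6
        have : a = b := by
          have := mul_eq_one_iff_inv_eq.mp this
          simpa [eq_comm] using this
        exact this
      have hbij : Function.Bijective ψ := Finite.injective_iff_bijective.mp hinj
      refine Fintype.sum_bijective ψ hbij _ _ fun f => ?_
      have hc1 : ((ψ f : F) : G) * c ^ i = (f : G) * c ^ i * (f : G)⁻¹ := by
        show (f : G) * c ^ i * (f : G)⁻¹ * (c ^ i)⁻¹ * c ^ i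
            = (f : G) * c ^ i * (f : G)⁻¹
        group
      rw [hc1]
    -- two evaluations of the double sum
    have S2 : ∀ v : V,
        (∑ i ∈ Finset.range n, ∑ f : F, ((f : G) * c ^ i) • v) = 0 := by
      intro v
      rw [Finset.sum_comm]
      refine Finset.sum_eq_zero fun f _ => ?_
      have : ∀ i ∈ Finset.range n,
          ((f : G) * c ^ i) • v = (f : G) • ((c ^ i) • v) := fun i _ => by
        rw [mul_smul]
      rw [Finset.sum_congr rfl this, ← Finset.smul_sum, h0, smul_zero]
    have S1 : ∀ v : V,
        (∑ i ∈ Finset.range n,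
          ∑ f : F, ((f : G) * c ^ i * (f : G)⁻¹) • v) = 0 := by
      intro v
      rw [Finset.sum_comm]
      refine Finset.sum_eq_zero fun f _ => ?_
      have : ∀ i ∈ Finset.range n,
          ((f : G) * c ^ i * (f : G)⁻¹) • v
            = (f : G) • ((c ^ i) • ((f : G)⁻¹ • v)) := fun i _ => by
        rw [mul_smul, mul_smul]
      rw [Finset.sum_congr rfl this, ← Finset.smul_sum, h0, smul_zero]
    -- comparing the two evaluations
    have main : ∀ v : V, (Nat.card F) • v = ∑ f : F, (f : G) • v := by
      intro v
      have e1 := S1 v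
      have e2 := S2 v
      rw [Finset.range_eq_Ico, Finset.sum_eq_sum_Ico_succ_bot hn0] at e1 e2
      have eb : (∑ i ∈ Finset.Ico 1 n,
            ∑ f : F, ((f : G) * c ^ i * (f : G)⁻¹) • v)
          = ∑ i ∈ Finset.Ico 1 n, ∑ f : F, ((f : G) * c ^ i) • v := by
        refine Finset.sum_congr rfl fun i hi => ?_
        rw [Finset.mem_Ico] at hi
        exact bij i hi.1 hi.2 v
      rw [eb] at e1
      simp only [pow_zero, mul_one, mul_inv_cancel_right, mul_inv_cancel,
        one_smul] at e1 e2
      have hcard : (∑ _f : F, v) = (Nat.card F) • v := by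
        rw [Finset.sum_const, Nat.card_eq_fintype_card, Finset.card_univ]
      rw [hcard] at e1
      simp only [zero_add] at e2
      exact add_right_cancel (e1.trans e2.symm)
    -- every element of F acts trivially: contradiction with faithfulness
    obtain ⟨f0, hf0ne⟩ := Subgroup.ne_bot_iff_exists_ne_one.mp hFne
    have hNk : ((Nat.card F : k)) ≠ 0 := by
      intro h
      have hdvd : p ∣ Nat.card F := (CharP.cast_eq_zero_iff k p _).mp h
      exact hp.one_lt.ne' (hcop.eq_one_of_dvd hdvd)
    have hinvar : ∀ v : V, (f0 : G) • v = v := by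
      intro v
      have hsum : (f0 : G) • (∑ f : F, (f : G) • v) = ∑ f : F, (f : G) • v := by
        rw [Finset.smul_sum]
        have : ∀ f : F, (f0 : G) • ((f : G) • v) = ((f0 * f : F) : G) • v := by
          intro f; rw [← mul_smul]; rfl
        rw [Finset.sum_congr rfl fun f _ => this f]
        exact Equiv.sum_comp (Equiv.mulLeft f0) fun f : F => ((f : F) : G) • v
      have h1 : (Nat.card F) • ((f0 : G) • v) = (Nat.card F) • v := by
        calc (Nat.card F) • ((f0 : G) • v)
            = (f0 : G) • ((Nat.card F) • v) := (smul_comm _ _ _)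
          _ = (f0 : G) • (∑ f : F, (f : G) • v) := by rw [main]
          _ = ∑ f : F, (f : G) • v := hsum
          _ = (Nat.card F) • v := (main v).symm
      have h2 : ((Nat.card F : k)) • ((f0 : G) • v)
          = ((Nat.card F : k)) • v := by
        rw [Nat.cast_smul_eq_nsmul, Nat.cast_smul_eq_nsmul]; exact h1
      exact smul_right_injective V hNk h2
    have : (f0 : G) = 1 := by
      refine eq_of_smul_eq_smul (α := V) fun v => ?_
      rw [hinvar v, one_smul]
    exact hf0ne (Subtype.ext (by simpa using this))
  obtain ⟨v, hw⟩ := key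
  set w : V := ∑ i ∈ Finset.range n, (c ^ i) • v with hwdef
  have hfix : c • w = w := by
    have h1 : c • w = ∑ i ∈ Finset.range n, (c ^ (i + 1)) • v := by
      rw [hwdef, Finset.smul_sum]
      refine Finset.sum_congr rfl fun i _ => ?_
      rw [← mul_smul, pow_succ']
    have h2 : (∑ i ∈ Finset.range (n + 1), (c ^ i) • v)
        = (∑ i ∈ Finset.range n, (c ^ (i + 1)) • v) + (c ^ 0) • v :=
      Finset.sum_range_succ' _ n
    have h3 : (∑ i ∈ Finset.range (n + 1), (c ^ i) • v)
        = w + (c ^ n) • v := by rw [Finset.sum_range_succ, hwdef]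
    rw [hcn] at h3
    simp only [pow_zero, one_smul] at h2 h3
    rw [h1]
    have := h2.symm.trans h3
    exact add_right_cancel (by rw [this])
  refine ⟨⟨w, hw, hfix⟩, ?_⟩
  -- Part 2: the semidirect product element of order p * n
  set φ : C →* MulAut (Multiplicative V) :=
    (addAutToMulAut V).comp ((DistribMulAction.toAddAut G V).comp C.subtype)
    with hφ
  set cc : C := ⟨c, hcmem⟩ with hcc
  have hcoe : ∀ m : ℕ, ((cc ^ m : C) : G) = c ^ m := fun m => by
    rw [SubmonoidClass.coe_pow]
  have hφapp : ∀ (x : C) (u : V),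
      φ x (Multiplicative.ofAdd u) = Multiplicative.ofAdd ((x : G) • u) :=
    fun x u => rfl
  set g : SemidirectProduct (Multiplicative V) C φ :=
    ⟨Multiplicative.ofAdd v, cc⟩ with hg
  have gpow : ∀ m : ℕ, g ^ m
      = ⟨Multiplicative.ofAdd (∑ i ∈ Finset.range m, (c ^ i) • v), cc ^ m⟩ := by
    intro m
    induction m with
    | zero => refine SemidirectProduct.ext ?_ ?_ <;> simp
    | succ m ih =>
        rw [pow_succ, ih, SemidirectProduct.mul_def]
        refine SemidirectProduct.ext ?_ ?_
        · show Multiplicative.ofAdd _ * φ (cc ^ m) (Multiplicative.ofAdd v) = _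
          rw [hφapp, hcoe]
          show Multiplicative.ofAdd
              ((∑ i ∈ Finset.range m, c ^ i • v) + c ^ m • v) = _
          rw [← Finset.sum_range_succ]
        · show cc ^ m * cc = cc ^ (m + 1)
          rw [pow_succ]
  have hccn : cc ^ n = 1 := by
    apply Subtype.ext
    rw [hcoe n, hcn]
    rfl
  have hgn : g ^ n = SemidirectProduct.inl (Multiplicative.ofAdd w) := by
    rw [gpow n, hccn]
    rfl
  have hgn_ne : g ^ n ≠ 1 := by
    rw [hgn]
    intro h
    have h2 := congrArg SemidirectProduct.left h
    simp only [SemidirectProduct.left_inl, SemidirectProduct.one_left,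
      ofAdd_eq_one] at h2
    exact hw h2
  have hpw : p • w = 0 := by
    rw [← Nat.cast_smul_eq_nsmul k, CharP.cast_eq_zero k p, zero_smul]
  have hgpn : g ^ (p * n) = 1 := by
    rw [mul_comm, pow_mul, hgn, ← map_pow, ← ofAdd_nsmul, hpw]
    simp
  have hcc_ord : orderOf cc = n := by
    rw [← hn]
    exact (orderOf_injective C.subtype C.subtype_injective cc).symm
  have hndvd : n ∣ orderOf g := by
    have h1 : orderOf (SemidirectProduct.rightHom g) ∣ orderOf g :=
      orderOf_map_dvd _ g
    rwa [show SemidirectProduct.rightHom g = cc from rfl, hcc_ord] at h1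
  refine ⟨g, ?_⟩
  have hdvd : orderOf g ∣ p * n := orderOf_dvd_of_pow_eq_one hgpn
  obtain ⟨t, ht⟩ := hndvd
  have htp : t ∣ p := by
    have h2 : n * t ∣ n * p := by rw [← ht, mul_comm n p]; exact hdvd
    exact (Nat.mul_dvd_mul_iff_left hn0).mp h2
  rcases (Nat.Prime.eq_one_or_self_of_dvd hp t htp) with h | h
  · exfalso
    apply hgn_ne
    have : orderOf g = n := by rw [ht, h, mul_one]
    rw [← this]
    exact pow_orderOf_eq_one g
  · rw [ht, h, mul_comm]
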